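/- For every integer p ≥ 0, (4/π) ∫_0^∞ y^{−3} cos(p y) (1 − cos y)² dy = r_p. In particular, for p = 0 this reads ∫_0^∞ y^{−3} (1 − cos y)² dy = ln 2. -/

import Mathlib

open MeasureTheory

open Real

/-- `r_p`, with the convention `m² ln|m| = 0` when `m = 0` (automatic since `Real.log 0 = 0`). -/
noncomputable def rFn (p : ℕ) : ℝ :=
  (1 / (2 * Real.pi)) *
    (((p : ℝ) - 2) ^ 2 * Real.log |(p : ℝ) - 2| - 4 * ((p : ℝ) - 1) ^ 2 * Real.log |(p : ℝ) - 1|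
      + 6 * (p : ℝ) ^ 2 * Real.log (p : ℝ) - 4 * ((p : ℝ) + 1) ^ 2 * Real.log ((p : ℝ) + 1)
      + ((p : ℝ) + 2) ^ 2 * Real.log ((p : ℝ) + 2))

lemma sin_cubic_nonneg (t : ℝ) (ht : 0 ≤ t) : t - Real.sin t ≤ t ^ 3 / 6 := by
  have hf : ∀ x : ℝ, HasDerivAt (fun s => s ^ 3 / 6 - s + Real.sin s)
      (x ^ 2 / 2 - 1 + Real.cos x) x := by
    intro x
    have h := (((hasDerivAt_pow 3 x).div_const 6).sub (hasDerivAt_id x)).add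
      (Real.hasDerivAt_sin x)
    refine h.congr_deriv ?_
    norm_num
    ring
  have mono : MonotoneOn (fun s => s ^ 3 / 6 - s + Real.sin s) (Set.Ici 0) := by
    apply monotoneOn_of_deriv_nonneg (convex_Ici 0)
    · exact (Continuous.continuousOn (by fun_prop))
    · intro x hx
      exact (hf x).differentiableAt.differentiableWithinAt
    · intro x hx
      rw [(hf x).deriv]
      nlinarith [Real.one_sub_sq_div_two_le_cos (x := x)]
  have h0 : (fun s => s ^ 3 / 6 - s + Real.sin s) 0 ≤ (fun s => s ^ 3 / 6 - s + Real.sin s) t :=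
    mono (Set.self_mem_Ici) ht ht
  simp at h0
  linarith

lemma sin_cubic_abs (t : ℝ) : |t - Real.sin t| ≤ |t| ^ 3 / 6 := by
  rcases le_total 0 t with ht | ht
  · rw [abs_of_nonneg ht, abs_of_nonneg (by nlinarith [Real.sin_le ht] : (0:ℝ) ≤ t - Real.sin t)]
    exact sin_cubic_nonneg t ht
  · have h := sin_cubic_nonneg (-t) (by linarith)
    rw [Real.sin_neg] at h
    rw [abs_of_nonpos ht]
    rw [abs_of_nonpos (by nlinarith [Real.le_sin ht] : t - Real.sin t ≤ 0)]
    linarith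

lemma cos_quartic (x : ℝ) : |Real.cos x - 1 + x ^ 2 / 2| ≤ x ^ 4 / 24 := by
  have hcos : Real.cos x = 2 * Real.cos (x / 2) ^ 2 - 1 := by
    rw [← Real.cos_two_mul]; ring_nf
  have h1 : Real.cos x - 1 + x ^ 2 / 2
      = 2 * ((x / 2 + Real.sin (x / 2)) * (x / 2 - Real.sin (x / 2))) := by
    linear_combination hcos + 2 * Real.sin_sq_add_cos_sq (x / 2)
  rw [h1]
  have h2 : |x / 2 + Real.sin (x / 2)| ≤ |x| := by
    calc |x / 2 + Real.sin (x / 2)| ≤ |x / 2| + |Real.sin (x / 2)| := abs_add_le _ _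
    _ ≤ |x / 2| + |x / 2| := by linarith [Real.abs_sin_le_abs (x := x / 2)]
    _ = |x| := by rw [abs_div, abs_two]; ring
  have h3 : |x / 2 - Real.sin (x / 2)| ≤ |x| ^ 3 / 48 := by
    have := sin_cubic_abs (x / 2)
    rw [abs_div] at this
    simp only [abs_two] at this
    calc |x / 2 - Real.sin (x / 2)| ≤ (|x| / 2) ^ 3 / 6 := this
    _ = |x| ^ 3 / 48 := by ring
  calc |2 * ((x / 2 + Real.sin (x / 2)) * (x / 2 - Real.sin (x / 2)))|
      = 2 * (|x / 2 + Real.sin (x / 2)| * |x / 2 - Real.sin (x / 2)|) := by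
        rw [abs_mul, abs_mul, abs_two]
    _ ≤ 2 * (|x| * (|x| ^ 3 / 48)) := by
        apply mul_le_mul_of_nonneg_left _ (by norm_num)
        exact mul_le_mul h2 h3 (abs_nonneg _) (abs_nonneg _)
    _ = |x| ^ 4 / 24 := by ring
    _ = x ^ 4 / 24 := by rw [← abs_pow, abs_of_nonneg (by positivity)]

noncomputable def gFn (a : ℝ) (y : ℝ) : ℝ :=
  (Real.cos (a * y) - 1 + a ^ 2 * (1 - Real.cos y)) / y ^ 3

lemma gFn_contOn (a : ℝ) : ContinuousOn (gFn a) {y : ℝ | y ≠ 0} := by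
  apply ContinuousOn.div (by fun_prop) (by fun_prop)
  intro y hy
  exact pow_ne_zero _ hy

lemma gFn_bound1 (a : ℝ) {y : ℝ} (hy : 0 < y) :
    |gFn a y| ≤ (a ^ 4 + a ^ 2) * y / 24 := by
  have h1 := cos_quartic (a * y)
  have h2 := cos_quartic y
  have hne : y ^ 3 ≠ 0 := pow_ne_zero _ hy.ne'
  have key : gFn a y = ((Real.cos (a * y) - 1 + (a * y) ^ 2 / 2)
      - a ^ 2 * (Real.cos y - 1 + y ^ 2 / 2)) / y ^ 3 := by
    unfold gFn; field_simp; ring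
  rw [key, abs_div, abs_of_pos (by positivity : (0:ℝ) < y ^ 3)]
  rw [div_le_iff₀ (by positivity)]
  calc |Real.cos (a * y) - 1 + (a * y) ^ 2 / 2 - a ^ 2 * (Real.cos y - 1 + y ^ 2 / 2)|
      ≤ |Real.cos (a * y) - 1 + (a * y) ^ 2 / 2| + |a ^ 2 * (Real.cos y - 1 + y ^ 2 / 2)| :=
        abs_sub _ _
    _ ≤ (a * y) ^ 4 / 24 + a ^ 2 * (y ^ 4 / 24) := by
        rw [abs_mul, abs_of_nonneg (by positivity : (0:ℝ) ≤ a ^ 2)]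
        gcongr
    _ ≤ (a ^ 4 + a ^ 2) * y / 24 * y ^ 3 := by nlinarith [sq_nonneg a, sq_nonneg y, hy.le]

lemma gFn_bound2 (a : ℝ) {y : ℝ} (hy : 0 < y) :
    |gFn a y| ≤ (2 + 4 * a ^ 2) / y ^ 3 := by
  have h1 : |Real.cos (a * y) - 1 + a ^ 2 * (1 - Real.cos y)| ≤ 2 + 4 * a ^ 2 := by
    have := Real.abs_cos_le_one (a * y)
    have := Real.abs_cos_le_one y
    have h := abs_le.mp (Real.abs_cos_le_one (a * y))
    have h' := abs_le.mp (Real.abs_cos_le_one y)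
    rw [abs_le]
    constructor <;> nlinarith [sq_nonneg a]
  rw [gFn, abs_div, abs_of_pos (by positivity : (0:ℝ) < y ^ 3)]
  gcongr

lemma gFn_integrable (a : ℝ) : IntegrableOn (gFn a) (Set.Ioi 0) := by
  have h1 : IntegrableOn (gFn a) (Set.Ioc 0 1) := by
    apply Integrable.mono' (integrable_const ((a ^ 4 + a ^ 2) / 24))
    · exact ((gFn_contOn a).mono (fun y hy => ne_of_gt hy.1)).aestronglyMeasurable
        measurableSet_Ioc
    · filter_upwards [ae_restrict_mem measurableSet_Ioc] with y hy
      calc ‖gFn a y‖ ≤ (a ^ 4 + a ^ 2) * y / 24 := gFn_bound1 a hy.1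
      _ ≤ (a ^ 4 + a ^ 2) / 24 := by nlinarith [hy.2, hy.1, sq_nonneg a, sq_nonneg (a^2)]
  have h2 : IntegrableOn (gFn a) (Set.Ioi 1) := by
    apply Integrable.mono'
      (((integrableOn_Ioi_rpow_of_lt (by norm_num : (-3:ℝ) < -1) one_pos)).const_mul (2 + 4 * a ^ 2))
    · exact ((gFn_contOn a).mono (fun y hy => ne_of_gt (lt_trans one_pos hy))).aestronglyMeasurable
        measurableSet_Ioi
    · filter_upwards [ae_restrict_mem measurableSet_Ioi] with y hy
      have hy0 : (0:ℝ) < y := lt_trans one_pos hy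
      have hr : y ^ (-3:ℝ) = (y ^ 3)⁻¹ := by
        rw [show (-3:ℝ) = -((3:ℕ):ℝ) by norm_num, Real.rpow_neg hy0.le, Real.rpow_natCast]
      calc ‖gFn a y‖ ≤ (2 + 4 * a ^ 2) / y ^ 3 := gFn_bound2 a hy0
      _ = (2 + 4 * a ^ 2) * y ^ (-3:ℝ) := by rw [hr]; ring
  have := h1.union h2
  rwa [Set.Ioc_union_Ioi_eq_Ioi (le_of_lt one_pos)] at this

noncomputable def FF (u : ℝ) : ℝ := (Real.cos u - 1) / u ^ 3

lemma FF_contOn : ContinuousOn FF {u : ℝ | u ≠ 0} := by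
  apply ContinuousOn.div (by fun_prop) (by fun_prop)
  intro y hy; exact pow_ne_zero _ hy

lemma uIcc_subset_pos {x y : ℝ} (hx : 0 < x) (hy : 0 < y) :
    Set.uIcc x y ⊆ {u : ℝ | u ≠ 0} := by
  intro z hz
  rcases Set.mem_uIcc.mp hz with ⟨h1, _⟩ | ⟨h1, _⟩ <;>
    exact ne_of_gt (lt_of_lt_of_le (by assumption) h1)

lemma FF_ii {x y : ℝ} (hx : 0 < x) (hy : 0 < y) : IntervalIntegrable FF volume x y :=
  (FF_contOn.mono (uIcc_subset_pos hx hy)).intervalIntegrable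

lemma gFn_integral {a : ℝ} (ha : 0 < a) :
    ∫ y in Set.Ioi (0:ℝ), gFn a y = a ^ 2 * Real.log a / 2 := by
  -- the truncation sequence
  set m : ℕ → ℝ := fun n => (n : ℝ) + 1 with hm_def
  have hm1 : ∀ n, (1:ℝ) ≤ m n := fun n => by
    have : (0:ℝ) ≤ (n:ℝ) := Nat.cast_nonneg n
    simp only [hm_def]; linarith
  have hm0 : ∀ n, (0:ℝ) < m n := fun n => lt_of_lt_of_le one_pos (hm1 n)
  have hminv : ∀ n, (0:ℝ) < 1 / m n := fun n => by positivity
  have hmono : Monotone (fun n => Set.Ioc (1 / m n) (m n)) := by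
    intro i j hij
    apply Set.Ioc_subset_Ioc
    · apply one_div_le_one_div_of_le (hm0 i)
      simp only [hm_def]; exact_mod_cast by exact_mod_cast Nat.add_le_add_right hij 1
    · simp only [hm_def]; exact_mod_cast Nat.add_le_add_right hij 1
  have hunion : (⋃ n, Set.Ioc (1 / m n) (m n)) = Set.Ioi (0:ℝ) := by
    ext x
    simp only [Set.mem_iUnion, Set.mem_Ioc, Set.mem_Ioi]
    constructor
    · rintro ⟨n, h1, _⟩; exact lt_trans (hminv n) h1
    · intro hx
      obtain ⟨n, hn⟩ := exists_nat_ge (max x (1 / x))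
      refine ⟨n, ?_, ?_⟩
      · have h1 : 1 / x ≤ (n:ℝ) := le_trans (le_max_right _ _) hn
        have : 1 / x < m n := lt_of_le_of_lt h1 (by simp [hm_def])
        calc 1 / m n < 1 / (1 / x) := by
              apply one_div_lt_one_div_of_lt (by positivity) this
        _ = x := one_div_one_div x
      · have h1 : x ≤ (n:ℝ) := le_trans (le_max_left _ _) hn
        exact le_trans h1 (by simp [hm_def])
  have hlim1 : Filter.Tendsto (fun n => ∫ y in Set.Ioc (1 / m n) (m n), gFn a y)
      Filter.atTop (nhds (∫ y in Set.Ioi (0:ℝ), gFn a y)) := by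
    have := tendsto_setIntegral_of_monotone (fun n => measurableSet_Ioc) hmono
      (by rw [hunion]; exact gFn_integrable a)
    rwa [hunion] at this
  -- rewrite each truncated integral
  have key : ∀ n, ∫ y in Set.Ioc (1 / m n) (m n), gFn a y
      = a ^ 2 * ((∫ u in (a * (1 / m n))..(1 / m n), FF u) + ∫ u in (m n)..(a * m n), FF u) := by
    intro n
    have hml : 1 / m n ≤ m n := by
      calc 1 / m n ≤ 1 / 1 := one_div_le_one_div_of_le one_pos (hm1 n)
      _ = 1 := by norm_num
      _ ≤ m n := hm1 n
    rw [← intervalIntegral.integral_of_le hml]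
    have e1 : Set.EqOn (gFn a) (fun y => a ^ 3 * FF (a * y) - a ^ 2 * FF y)
        (Set.uIcc (1 / m n) (m n)) := by
      intro y hy
      have hy0 : y ≠ 0 := uIcc_subset_pos (hminv n) (hm0 n) hy
      simp only [gFn, FF]
      have hay : a * y ≠ 0 := mul_ne_zero ha.ne' hy0
      field_simp
      ring
    rw [intervalIntegral.integral_congr e1]
    have hII1 : IntervalIntegrable (fun y => a ^ 3 * FF (a * y)) volume (1 / m n) (m n) := by
      apply ContinuousOn.intervalIntegrable
      apply ContinuousOn.mono _ (uIcc_subset_pos (hminv n) (hm0 n))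
      apply ContinuousOn.mul continuousOn_const
      apply FF_contOn.comp (by fun_prop)
      intro y hy
      exact mul_ne_zero ha.ne' hy
    have hII2 : IntervalIntegrable (fun y => a ^ 2 * FF y) volume (1 / m n) (m n) :=
      (FF_ii (hminv n) (hm0 n)).const_mul _
    rw [intervalIntegral.integral_sub hII1 hII2]
    rw [intervalIntegral.integral_const_mul, intervalIntegral.integral_const_mul]
    rw [intervalIntegral.integral_comp_mul_left FF ha.ne']
    have add1 : (∫ u in (a * (1 / m n))..(1 / m n), FF u) + ∫ u in (1 / m n)..(m n), FF u
        = ∫ u in (a * (1 / m n))..(m n), FF u :=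
      intervalIntegral.integral_add_adjacent_intervals
        (FF_ii (by positivity) (hminv n)) (FF_ii (hminv n) (hm0 n))
    have add2 : (∫ u in (a * (1 / m n))..(m n), FF u) + ∫ u in (m n)..(a * m n), FF u
        = ∫ u in (a * (1 / m n))..(a * m n), FF u :=
      intervalIntegral.integral_add_adjacent_intervals
        (FF_ii (by positivity) (hm0 n)) (FF_ii (hm0 n) (by positivity))
    have hsmul : a ^ 3 * (a⁻¹ • ∫ u in (a * (1 / m n))..(a * m n), FF u)
        = a ^ 2 * ∫ u in (a * (1 / m n))..(a * m n), FF u := by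
      rw [smul_eq_mul]
      field_simp
    rw [hsmul, ← add2, ← add1]
    ring
  -- E-term analysis
  set E : ℝ → ℝ := fun u => (Real.cos u - 1 + u ^ 2 / 2) / u ^ 3 with hE_def
  have hE_cont : ContinuousOn E {u : ℝ | u ≠ 0} := by
    apply ContinuousOn.div (by fun_prop) (by fun_prop)
    intro y hy; exact pow_ne_zero _ hy
  have hE_abs : ∀ {u : ℝ}, 0 < u → |E u| ≤ u / 24 := by
    intro u hu
    simp only [hE_def]
    rw [abs_div, abs_of_pos (by positivity : (0:ℝ) < u ^ 3), div_le_iff₀ (by positivity)]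
    calc |Real.cos u - 1 + u ^ 2 / 2| ≤ u ^ 4 / 24 := cos_quartic u
    _ = u / 24 * u ^ 3 := by ring
  have hmtop : Filter.Tendsto m Filter.atTop Filter.atTop := by
    simp only [hm_def]
    exact Filter.tendsto_atTop_add_const_right _ 1 tendsto_natCast_atTop_atTop
  have hmsq : Filter.Tendsto (fun n => m n * m n) Filter.atTop Filter.atTop :=
    Filter.Tendsto.atTop_mul_atTop₀ hmtop hmtop
  have hsplit : ∀ n, (∫ u in (a * (1 / m n))..(1 / m n), FF u)
      = (∫ u in (a * (1 / m n))..(1 / m n), E u) + 1 / 2 * Real.log a := by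
    intro n
    have h0 : (0:ℝ) < a * (1 / m n) := by positivity
    have hnot : (0:ℝ) ∉ Set.uIcc (a * (1 / m n)) (1 / m n) := by
      intro h
      exact (uIcc_subset_pos h0 (hminv n) h) rfl
    have eq1 : Set.EqOn FF (fun u => E u - 1 / 2 * (1 / u))
        (Set.uIcc (a * (1 / m n)) (1 / m n)) := by
      intro u hu
      have hu0 : u ≠ 0 := uIcc_subset_pos h0 (hminv n) hu
      simp only [FF, hE_def]
      field_simp
      ring
    have hII3 : IntervalIntegrable (fun u => 1 / 2 * (1 / u)) volume (a * (1 / m n)) (1 / m n) := by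
      apply ContinuousOn.intervalIntegrable
      apply ContinuousOn.mono _ (uIcc_subset_pos h0 (hminv n))
      exact ContinuousOn.mul continuousOn_const
        (ContinuousOn.div continuousOn_const (by fun_prop) (fun y hy => hy))
    rw [intervalIntegral.integral_congr eq1,
      intervalIntegral.integral_sub
        ((hE_cont.mono (uIcc_subset_pos h0 (hminv n))).intervalIntegrable) hII3,
      intervalIntegral.integral_const_mul, integral_one_div hnot]
    have : (1 / m n) / (a * (1 / m n)) = a⁻¹ := by
      field_simp
      exact div_self (hm0 n).ne'
    rw [this, Real.log_inv]
    ring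
  have hT1 : Filter.Tendsto (fun n => ∫ u in (a * (1 / m n))..(1 / m n), FF u)
      Filter.atTop (nhds (0 + 1 / 2 * Real.log a)) := by
    simp only [hsplit]
    refine Filter.Tendsto.add ?_ tendsto_const_nhds
    apply squeeze_zero_norm (a := fun n => max a 1 * |1 - a| / 24 / (m n * m n))
    · intro n
      have h0 : (0:ℝ) < a * (1 / m n) := by positivity
      have hb := intervalIntegral.norm_integral_le_of_norm_le_const
        (C := max a 1 / (24 * m n)) (f := E) (a := a * (1 / m n)) (b := 1 / m n) ?_
      · refine hb.trans ?_
        have habs : |1 / m n - a * (1 / m n)| = |1 - a| / m n := by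
          rw [show 1 / m n - a * (1 / m n) = (1 - a) / m n by ring, abs_div,
            abs_of_pos (hm0 n)]
        rw [habs]
        apply le_of_eq
        have hmn := (hm0 n).ne'
        field_simp
      · intro u hu
        rcases Set.mem_uIoc.mp hu with ⟨h1, h2⟩ | ⟨h1, h2⟩
        · have hu0 : 0 < u := lt_trans h0 h1
          refine (hE_abs hu0).trans ?_
          rw [div_le_div_iff₀ (by norm_num) (by positivity)]
          calc u * (24 * m n) ≤ (1 / m n) * (24 * m n) := by
                apply mul_le_mul_of_nonneg_right h2 (by positivity)
          _ = 24 := by have := (hm0 n).ne'; field_simp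
          _ ≤ max a 1 * 24 := by nlinarith [le_max_right a 1]
        · have hu0 : 0 < u := lt_trans (hminv n) h1
          refine (hE_abs hu0).trans ?_
          rw [div_le_div_iff₀ (by norm_num) (by positivity)]
          calc u * (24 * m n) ≤ (a * (1 / m n)) * (24 * m n) := by
                apply mul_le_mul_of_nonneg_right h2 (by positivity)
          _ = a * 24 := by have := (hm0 n).ne'; field_simp
          _ ≤ max a 1 * 24 := by nlinarith [le_max_left a 1]
    · exact Filter.Tendsto.div_atTop tendsto_const_nhds hmsq
  have hT2 : Filter.Tendsto (fun n => ∫ u in (m n)..(a * m n), FF u)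
      Filter.atTop (nhds 0) := by
    set c := min 1 a with hc_def
    have hc : 0 < c := lt_min one_pos ha
    apply squeeze_zero_norm (a := fun n => 2 * |a - 1| / c ^ 3 / (m n * m n))
    · intro n
      have hb := intervalIntegral.norm_integral_le_of_norm_le_const
        (C := 2 / (c * m n) ^ 3) (f := FF) (a := m n) (b := a * m n) ?_
      · refine hb.trans ?_
        have habs : |a * m n - m n| = |a - 1| * m n := by
          rw [show a * m n - m n = (a - 1) * m n by ring, abs_mul, abs_of_pos (hm0 n)]
        rw [habs]
        apply le_of_eq
        have hmn := (hm0 n).ne'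
        have hcn := hc.ne'
        field_simp
      · intro u hu
        have humem : c * m n ≤ u := by
          rcases Set.mem_uIoc.mp hu with ⟨h1, _⟩ | ⟨h1, _⟩
          · calc c * m n ≤ 1 * m n := by
                  apply mul_le_mul_of_nonneg_right (min_le_left _ _) (hm0 n).le
            _ = m n := one_mul _
            _ ≤ u := h1.le
          · calc c * m n ≤ a * m n := by
                  apply mul_le_mul_of_nonneg_right (min_le_right _ _) (hm0 n).le
            _ ≤ u := h1.le
        have hu0 : 0 < u := lt_of_lt_of_le (by positivity) humem
        simp only [FF]
        rw [norm_div, Real.norm_of_nonneg (by positivity : (0:ℝ) ≤ u ^ 3)]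
        have h2 : ‖Real.cos u - 1‖ ≤ 2 := by
          rw [Real.norm_eq_abs, abs_le]
          constructor <;> nlinarith [abs_le.mp (Real.abs_cos_le_one u)]
        calc ‖Real.cos u - 1‖ / u ^ 3 ≤ 2 / u ^ 3 :=
              div_le_div_of_nonneg_right h2 (by positivity)
        _ ≤ 2 / (c * m n) ^ 3 := by
              apply div_le_div_of_nonneg_left (by norm_num) (by positivity)
              exact pow_le_pow_left₀ (by positivity) humem 3
    · exact Filter.Tendsto.div_atTop tendsto_const_nhds hmsq
  have hlim2 : Filter.Tendsto (fun n => ∫ y in Set.Ioc (1 / m n) (m n), gFn a y)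
      Filter.atTop (nhds (a ^ 2 * ((0 + 1 / 2 * Real.log a) + 0))) := by
    simp only [key]
    exact Filter.Tendsto.const_mul _ (hT1.add hT2)
  have := tendsto_nhds_unique hlim1 hlim2
  rw [this]
  ring

lemma gFn_integral' {a : ℝ} (ha : 0 ≤ a) :
    ∫ y in Set.Ioi (0:ℝ), gFn a y = a ^ 2 * Real.log a / 2 := by
  rcases eq_or_lt_of_le ha with h | h
  · subst h
    simp [gFn, Real.log_zero]
  · exact gFn_integral h

lemma trig_id (b c : ℝ) :
    1 / 4 * Real.cos (b - 2 * c) - Real.cos (b - c) + 3 / 2 * Real.cos b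
      - Real.cos (b + c) + 1 / 4 * Real.cos (b + 2 * c)
    = Real.cos b * (1 - Real.cos c) ^ 2 := by
  simp only [Real.cos_add, Real.cos_sub, Real.cos_two_mul, Real.sin_two_mul]
  ring

lemma main_formula (p : ℕ) :
    (4 / Real.pi) *
        ∫ y in Set.Ioi (0 : ℝ),
          y ^ (-3 : ℝ) * Real.cos ((p : ℝ) * y) * (1 - Real.cos y) ^ 2 = rFn p := by
  set P : ℝ := (p : ℝ) with hP
  have hP0 : 0 ≤ P := Nat.cast_nonneg p
  have hkey : ∫ y in Set.Ioi (0 : ℝ), y ^ (-3 : ℝ) * Real.cos (P * y) * (1 - Real.cos y) ^ 2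
      = 1 / 4 * (|P - 2| ^ 2 * Real.log |P - 2| / 2)
        - |P - 1| ^ 2 * Real.log |P - 1| / 2
        + 3 / 2 * (P ^ 2 * Real.log P / 2)
        - (P + 1) ^ 2 * Real.log (P + 1) / 2
        + 1 / 4 * ((P + 2) ^ 2 * Real.log (P + 2) / 2) := by
    have hcong : Set.EqOn
        (fun y => y ^ (-3 : ℝ) * Real.cos (P * y) * (1 - Real.cos y) ^ 2)
        (fun y => 1 / 4 * gFn |P - 2| y - gFn |P - 1| y + 3 / 2 * gFn P y
          - gFn (P + 1) y + 1 / 4 * gFn (P + 2) y) (Set.Ioi 0) := by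
      intro y hy
      have hy0 : (0:ℝ) < y := hy
      have hr : y ^ (-3:ℝ) = (y ^ 3)⁻¹ := by
        rw [show (-3:ℝ) = -((3:ℕ):ℝ) by norm_num, Real.rpow_neg hy0.le, Real.rpow_natCast]
      simp only [gFn]
      rw [hr]
      have c1 : Real.cos (|P - 2| * y) = Real.cos ((P - 2) * y) := by
        rcases abs_cases (P - 2) with ⟨h, _⟩ | ⟨h, _⟩
        · rw [h]
        · rw [h, neg_mul, Real.cos_neg]
      have c2 : Real.cos (|P - 1| * y) = Real.cos ((P - 1) * y) := by
        rcases abs_cases (P - 1) with ⟨h, _⟩ | ⟨h, _⟩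
        · rw [h]
        · rw [h, neg_mul, Real.cos_neg]
      rw [c1, c2, sq_abs, sq_abs]
      have htrig := trig_id (P * y) y
      have e1 : (P - 2) * y = P * y - 2 * y := by ring
      have e2 : (P - 1) * y = P * y - y := by ring
      have e3 : (P + 1) * y = P * y + y := by ring
      have e4 : (P + 2) * y = P * y + 2 * y := by ring
      rw [e1, e2, e3, e4]
      simp only [div_eq_mul_inv]
      linear_combination (-(y ^ 3)⁻¹) * htrig
    rw [setIntegral_congr_fun measurableSet_Ioi hcong]
    have i1 := (gFn_integrable |P - 2|).const_mul (1/4 : ℝ)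
    have i2 := gFn_integrable |P - 1|
    have i3 := (gFn_integrable P).const_mul (3/2 : ℝ)
    have i4 := gFn_integrable (P + 1)
    have i5 := (gFn_integrable (P + 2)).const_mul (1/4 : ℝ)
    have h12 : Integrable (fun y => 1 / 4 * gFn |P - 2| y - gFn |P - 1| y)
        (volume.restrict (Set.Ioi 0)) := i1.sub i2
    have h123 : Integrable
        (fun y => 1 / 4 * gFn |P - 2| y - gFn |P - 1| y + 3 / 2 * gFn P y)
        (volume.restrict (Set.Ioi 0)) := h12.add i3
    have h1234 : Integrable
        (fun y => 1 / 4 * gFn |P - 2| y - gFn |P - 1| y + 3 / 2 * gFn P y - gFn (P + 1) y)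
        (volume.restrict (Set.Ioi 0)) := h123.sub i4
    rw [integral_add h1234 i5, integral_sub h123 i4, integral_add h12 i3,
      integral_sub i1 i2, integral_const_mul, integral_const_mul, integral_const_mul,
      gFn_integral' (abs_nonneg (P - 2)), gFn_integral' (abs_nonneg (P - 1)),
      gFn_integral' hP0, gFn_integral' (by linarith : (0:ℝ) ≤ P + 1),
      gFn_integral' (by linarith : (0:ℝ) ≤ P + 2)]
  rw [hkey, rFn, ← hP, sq_abs, sq_abs]
  field_simp
  ring

theorem stmt4 :
    (∀ p : ℕ,
      (4 / Real.pi) *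
          ∫ y in Set.Ioi (0 : ℝ),
            y ^ (-3 : ℝ) * Real.cos ((p : ℝ) * y) * (1 - Real.cos y) ^ 2 = rFn p) ∧
    ∫ y in Set.Ioi (0 : ℝ), y ^ (-3 : ℝ) * (1 - Real.cos y) ^ 2 = Real.log 2 := by
  refine ⟨main_formula, ?_⟩
  have h0 := main_formula 0
  have hr0 : rFn 0 = 4 / Real.pi * Real.log 2 := by
    rw [rFn]
    norm_num
    field_simp
    ring
  simp only [Nat.cast_zero, zero_mul, Real.cos_zero, mul_one] at h0
  rw [hr0] at h0
  have hne : (4 / Real.pi : ℝ) ≠ 0 := by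
    apply div_ne_zero (by norm_num) Real.pi_ne_zero
  exact mul_left_cancel₀ hne h0
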